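/- arXiv:2604.09074 — 3 statements merged into one kernel-verified Lean document; each statement's English description precedes it below -/
import Mathlib

section
/- Let Ψ ∈ ℝ^{(n+m)×(n+m)} be symmetric positive definite with first m rows Ψ₁ and last n rows Ψ₂, let X̄₁ ∈ ℝ^{n×(n+m)}, set [B̂ Â] := X̄₁ Ψ⁻¹, fix Q ∈ ℝ^{n×n}, R ∈ ℝ^{m×m}, λ ∈ ℝ, σ_w² ∈ ℝ. Define the indirect value set 𝒥_ind := { Tr((Q + Kᵀ R K)Σ) + λ Tr([Kᵀ Iₙ] Ψ⁻¹ [Kᵀ Iₙ]ᵀ Σ) : K ∈ ℝ^{m×n}, Σ ∈ ℝ^{n×n} symmetric positive semidefinite, Σ = σ_w² Iₙ + [B̂ Â][Kᵀ Iₙ]ᵀ Σ ([B̂ Â][Kᵀ Iₙ]ᵀ)ᵀ } and the direct value set 𝒥_dir := { Tr((Q + Vᵀ Ψ₁ᵀ R Ψ₁ V)Σ) + λ Tr(Ψ V Σ Vᵀ) : V ∈ ℝ^{(n+m)×n}, Σ ∈ ℝ^{n×n} symmetric positive semidefinite, Ψ₂ V = Iₙ, Σ = σ_w² Iₙ + X̄₁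 V Σ Vᵀ X̄₁ᵀ }. Then 𝒥_ind = 𝒥_dir; in particular the two optimization problems have the same optimal value (the infima of the two sets coincide). -/
open Matrix

lemma stmt6_submatrix_mul {l p q r : Type*} [Fintype q] [DecidableEq q]
    (A : Matrix p q ℝ) (B : Matrix q r ℝ) (f : l → p) :
    (A * B).submatrix f id = A.submatrix f id * B := by
  ext i j; simp [mul_apply]

lemma stmt6_fromRows_inr {m n p : ℕ} (A : Matrix (Fin m) (Fin p) ℝ)
    (B : Matrix (Fin n) (Fin p) ℝ) : (fromRows A B).submatrix Sum.inr id = B := by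
  ext i j; simp

lemma stmt6_fromRows_inl {m n p : ℕ} (A : Matrix (Fin m) (Fin p) ℝ)
    (B : Matrix (Fin n) (Fin p) ℝ) : (fromRows A B).submatrix Sum.inl id = A := by
  ext i j; simp

lemma stmt6_fromRows_eq {m n p : ℕ} (M : Matrix (Fin m ⊕ Fin n) (Fin p) ℝ) :
    fromRows (M.submatrix Sum.inl id) (M.submatrix Sum.inr id) = M := by
  ext (i|i) j <;> simp

lemma stmt6_trace {p q : Type*} [Fintype p] [Fintype q]
    (M : Matrix p p ℝ) (A : Matrix p q ℝ) (S : Matrix q q ℝ) :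
    (Aᵀ * M * A * S).trace = (M * A * S * Aᵀ).trace := by
  rw [Matrix.mul_assoc (Aᵀ * M), Matrix.mul_assoc Aᵀ, trace_mul_comm]
  simp only [Matrix.mul_assoc]

lemma stmt6_trace4 {p q : Type*} [Fintype p] [Fintype q]
    (M : Matrix p p ℝ) (A : Matrix p q ℝ) (S : Matrix q q ℝ) :
    (Aᵀ * (M * (A * S))).trace = (A * (S * (Aᵀ * M))).trace := by
  rw [← Matrix.mul_assoc A S, trace_mul_comm (A * S)]
  simp only [Matrix.mul_assoc]

/-- Theorem 2 of the paper. Equivalence of the indirect and the direct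
Bayesian data-driven LQR formulations: with `[B̂ Â] = X̄₁ Ψ⁻¹`, the set of cost values of
feasible points of the indirect problem equals that of the direct (covariance
parametrized) problem; in particular the infima coincide. -/
theorem stmt6 (n m : ℕ)
    (Ψ : Matrix (Fin m ⊕ Fin n) (Fin m ⊕ Fin n) ℝ) (hΨ : Ψ.PosDef)
    (Xb : Matrix (Fin n) (Fin m ⊕ Fin n) ℝ)
    (Q : Matrix (Fin n) (Fin n) ℝ) (R : Matrix (Fin m) (Fin m) ℝ)
    (lam σw2 : ℝ)
    (Jind Jdir : Set ℝ)
    (hJind : Jind = {c : ℝ |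
      ∃ (K : Matrix (Fin m) (Fin n) ℝ) (Sig : Matrix (Fin n) (Fin n) ℝ),
        Sig.PosSemidef ∧
        Sig = σw2 • (1 : Matrix (Fin n) (Fin n) ℝ)
          + (Xb * Ψ⁻¹ * fromRows K (1 : Matrix (Fin n) (Fin n) ℝ)) * Sig
            * (Xb * Ψ⁻¹ * fromRows K (1 : Matrix (Fin n) (Fin n) ℝ))ᵀ ∧
        c = ((Q + Kᵀ * R * K) * Sig).trace
          + lam * ((fromRows K (1 : Matrix (Fin n) (Fin n) ℝ))ᵀ * Ψ⁻¹
              * fromRows K (1 : Matrix (Fin n) (Fin n) ℝ) * Sig).trace})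
    (hJdir : Jdir = {c : ℝ |
      ∃ (V : Matrix (Fin m ⊕ Fin n) (Fin n) ℝ) (Sig : Matrix (Fin n) (Fin n) ℝ),
        Sig.PosSemidef ∧
        Ψ.submatrix Sum.inr id * V = 1 ∧
        Sig = σw2 • (1 : Matrix (Fin n) (Fin n) ℝ) + Xb * V * Sig * Vᵀ * Xbᵀ ∧
        c = ((Q + Vᵀ * (Ψ.submatrix Sum.inl id)ᵀ * R * Ψ.submatrix Sum.inl id * V)
              * Sig).trace
          + lam * (Ψ * V * Sig * Vᵀ).trace}) :
    Jind = Jdir ∧ sInf Jind = sInf Jdir := by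
  have hdet : IsUnit Ψ.det := isUnit_iff_ne_zero.mpr hΨ.det_pos.ne'
  have hMul : Ψ * Ψ⁻¹ = 1 := mul_nonsing_inv _ hdet
  have hMul' : Ψ⁻¹ * Ψ = 1 := nonsing_inv_mul _ hdet
  have hsym : Ψᵀ = Ψ := hΨ.isHermitian.eq
  have hsyminv : (Ψ⁻¹)ᵀ = Ψ⁻¹ := by rw [transpose_nonsing_inv, hsym]
  have hEq : Jind = Jdir := by
    subst hJind hJdir
    ext c
    simp only [Set.mem_setOf_eq]
    constructor
    · rintro ⟨K, Sig, hpsd, hfix, hc⟩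
      refine ⟨Ψ⁻¹ * fromRows K (1 : Matrix (Fin n) (Fin n) ℝ), Sig, hpsd, ?_, ?_, ?_⟩
      · rw [← Matrix.mul_assoc, ← stmt6_submatrix_mul Ψ Ψ⁻¹ Sum.inr, hMul,
          ← stmt6_submatrix_mul, Matrix.one_mul, stmt6_fromRows_inr]
      · nth_rewrite 1 [hfix]
        simp only [transpose_mul, Matrix.mul_assoc]
      · rw [hc]
        have hK : Ψ.submatrix Sum.inl id
            * (Ψ⁻¹ * fromRows K (1 : Matrix (Fin n) (Fin n) ℝ)) = K := by
          rw [← Matrix.mul_assoc, ← stmt6_submatrix_mul Ψ Ψ⁻¹ Sum.inl, hMul,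
            ← stmt6_submatrix_mul, Matrix.one_mul, stmt6_fromRows_inl]
        have hKT : (Ψ⁻¹ * fromRows K (1 : Matrix (Fin n) (Fin n) ℝ))ᵀ
            * (Ψ.submatrix Sum.inl id)ᵀ = Kᵀ := by rw [← transpose_mul, hK]
        have hF : Ψ * (Ψ⁻¹ * fromRows K (1 : Matrix (Fin n) (Fin n) ℝ))
            = fromRows K (1 : Matrix (Fin n) (Fin n) ℝ) := by
          rw [← Matrix.mul_assoc, hMul, Matrix.one_mul]
        congr 1
        · rw [hKT, Matrix.mul_assoc (Kᵀ * R), hK]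
        · congr 1
          rw [hF, transpose_mul, hsyminv]
          simp only [Matrix.mul_assoc]
          exact stmt6_trace4 Ψ⁻¹ _ Sig
    · rintro ⟨V, Sig, hpsd, hV2, hfix, hc⟩
      have hF : fromRows (Ψ.submatrix Sum.inl id * V) (1 : Matrix (Fin n) (Fin n) ℝ)
          = Ψ * V := by
        rw [← hV2, ← stmt6_submatrix_mul, ← stmt6_submatrix_mul, stmt6_fromRows_eq]
      have hV : Ψ⁻¹ * (Ψ * V) = V := by rw [← Matrix.mul_assoc, hMul', Matrix.one_mul]
      refine ⟨Ψ.submatrix Sum.inl id * V, Sig, hpsd, ?_⟩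
      rw [hF]
      constructor
      · nth_rewrite 1 [hfix]
        rw [Matrix.mul_assoc Xb Ψ⁻¹, hV]
        simp only [transpose_mul, Matrix.mul_assoc]
      · rw [hc]
        congr 1
        · simp only [transpose_mul, Matrix.mul_assoc]
        · congr 1
          rw [stmt6_trace, hV, transpose_mul, hsym, ← Matrix.mul_assoc,
            trace_mul_comm]
          simp only [Matrix.mul_assoc]
          exact stmt6_trace4 Ψ V Sig
  exact ⟨hEq, by rw [hEq]⟩
end

section
/- Let σ_w² > 0, λ ≥ 0, let Q ∈ ℝ^{n×n} and R ∈ ℝ^{m×m} be symmetric positive semidefinite, let Ψ ∈ ℝ^{(n+m)×(n+m)} be symmetric positive semidefinite with first m rows Ψ₁ and last n rows Ψ₂, and let X̄₁ ∈ ℝ^{n×(n+m)}. Suppose Σ ∈ ℝ^{n×n}, S ∈ ℝ^{(n+m)×n}, L ∈ ℝ^{m×m}, M ∈ ℝ^{(n+m)×(n+m)} satisfy Ψ₂ S = Σ and the three block matrices [[Σ − σ_w² Iₙ, X̄₁ S],[Sᵀ X̄₁ᵀ, Σ]], [[L, Ψ₁ S],[Sᵀ Ψ₁ᵀ, Σ]],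 [[M, S],[Sᵀ, Σ]] are symmetric positive semidefinite. Then Σ is positive definite, and V := S Σ⁻¹ satisfies: Ψ₂ V = Iₙ; Σ − σ_w² Iₙ − X̄₁ V Σ Vᵀ X̄₁ᵀ is positive semidefinite; L − Ψ₁ V Σ Vᵀ Ψ₁ᵀ is positive semidefinite; M − V Σ Vᵀ is positive semidefinite; and Tr(Q Σ) + Tr(R L) + λ Tr(M Ψ) ≥ Tr((Q + Vᵀ Ψ₁ᵀ R Ψ₁ V)Σ) + λ Tr(Ψ V Σ Vᵀ). -/
open Matrix

private lemma psd_trace_nonneg {ι : Type*} [Fintype ι] [DecidableEq ι]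
    {A : Matrix ι ι ℝ} (hA : A.PosSemidef) : 0 ≤ A.trace := by
  rw [Matrix.trace]
  refine Finset.sum_nonneg fun i _ => ?_
  have := hA.diag_nonneg (i := i)
  simpa [dotProduct, mulVec, Pi.single_apply] using this

private lemma trace_mul_psd_nonneg {ι : Type*} [Fintype ι] [DecidableEq ι]
    {A B : Matrix ι ι ℝ} (hA : A.PosSemidef) (hB : B.PosSemidef) :
    0 ≤ (A * B).trace := by
  obtain ⟨C, hC⟩ : ∃ C : Matrix ι ι ℝ, A = Cᴴ * C := by
    open scoped MatrixOrder in
    exact CStarAlgebra.nonneg_iff_eq_star_mul_self.mp hA.nonneg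
  rw [hC, Matrix.mul_assoc, Matrix.trace_mul_comm]
  exact psd_trace_nonneg ((hB.mul_mul_conjTranspose_same C))

private lemma schur_aux {ι κ : Type*} [Fintype ι] [Fintype κ] [DecidableEq κ]
    {A : Matrix ι ι ℝ} {B : Matrix ι κ ℝ} {D : Matrix κ κ ℝ} (hD : D.PosDef)
    (h : (fromBlocks A B Bᵀ D).PosSemidef) : (A - B * D⁻¹ * Bᵀ).PosSemidef := by
  haveI := D.invertibleOfIsUnitDet (isUnit_iff_isUnit_det _ |>.1 hD.isUnit)
  have h2 : Bᴴ = Bᵀ := conjTranspose_eq_transpose_of_trivial B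
  rw [← h2] at h ⊢
  exact (Matrix.PosDef.fromBlocks₂₂ A B hD).mp h

/-- forward direction of Proposition 1. A feasible point
`(Σ, S, L, M)` of the SDP yields, via `V := S Σ⁻¹`, a feasible point of the direct
Bayesian LQR problem with relaxed Lyapunov inequality and no larger cost.  Moreover `Σ` is
positive definite. -/
theorem stmt8 (n m : ℕ)
    (σw2 lam : ℝ) (hσ : 0 < σw2) (hlam : 0 ≤ lam)
    (Q : Matrix (Fin n) (Fin n) ℝ) (hQ : Q.PosSemidef)
    (R : Matrix (Fin m) (Fin m) ℝ) (hR : R.PosSemidef)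
    (Ψ : Matrix (Fin m ⊕ Fin n) (Fin m ⊕ Fin n) ℝ) (hΨ : Ψ.PosSemidef)
    (Xb : Matrix (Fin n) (Fin m ⊕ Fin n) ℝ)
    (Sig : Matrix (Fin n) (Fin n) ℝ)
    (S : Matrix (Fin m ⊕ Fin n) (Fin n) ℝ)
    (L : Matrix (Fin m) (Fin m) ℝ)
    (M : Matrix (Fin m ⊕ Fin n) (Fin m ⊕ Fin n) ℝ)
    (hfeas : Ψ.submatrix Sum.inr id * S = Sig)
    (hblk1 : (fromBlocks (Sig - σw2 • (1 : Matrix (Fin n) (Fin n) ℝ)) (Xb * S)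
        (Sᵀ * Xbᵀ) Sig).PosSemidef)
    (hblk2 : (fromBlocks L (Ψ.submatrix Sum.inl id * S)
        (Sᵀ * (Ψ.submatrix Sum.inl id)ᵀ) Sig).PosSemidef)
    (hblk3 : (fromBlocks M S Sᵀ Sig).PosSemidef) :
    Sig.PosDef ∧
    Ψ.submatrix Sum.inr id * (S * Sig⁻¹) = 1 ∧
    (Sig - σw2 • (1 : Matrix (Fin n) (Fin n) ℝ)
      - Xb * (S * Sig⁻¹) * Sig * (S * Sig⁻¹)ᵀ * Xbᵀ).PosSemidef ∧
    (L - Ψ.submatrix Sum.inl id * (S * Sig⁻¹) * Sig * (S * Sig⁻¹)ᵀ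
        * (Ψ.submatrix Sum.inl id)ᵀ).PosSemidef ∧
    (M - (S * Sig⁻¹) * Sig * (S * Sig⁻¹)ᵀ).PosSemidef ∧
    ((Q + (S * Sig⁻¹)ᵀ * (Ψ.submatrix Sum.inl id)ᵀ * R * Ψ.submatrix Sum.inl id
        * (S * Sig⁻¹)) * Sig).trace
      + lam * (Ψ * (S * Sig⁻¹) * Sig * (S * Sig⁻¹)ᵀ).trace
      ≤ (Q * Sig).trace + (R * L).trace + lam * (M * Ψ).trace := by
  set Ψ₁ := Ψ.submatrix Sum.inl (id : Fin m ⊕ Fin n → Fin m ⊕ Fin n) with hΨ₁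
  set Ψ₂ := Ψ.submatrix Sum.inr (id : Fin m ⊕ Fin n → Fin m ⊕ Fin n) with hΨ₂
  -- Σ − σw² I is PSD (top-left block of hblk1)
  have hA1 : (Sig - σw2 • (1 : Matrix (Fin n) (Fin n) ℝ)).PosSemidef := by
    have := hblk1.submatrix Sum.inl
    have heq : (fromBlocks (Sig - σw2 • (1 : Matrix (Fin n) (Fin n) ℝ)) (Xb * S)
        (Sᵀ * Xbᵀ) Sig).submatrix Sum.inl Sum.inl
        = Sig - σw2 • (1 : Matrix (Fin n) (Fin n) ℝ) := by
      ext i j; simp [fromBlocks]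
    rwa [heq] at this
  -- σw² I is PD
  have hsm : (σw2 • (1 : Matrix (Fin n) (Fin n) ℝ)).PosDef := by
    rw [Matrix.smul_one_eq_diagonal]
    exact Matrix.posDef_diagonal_iff.mpr fun _ => hσ
  have hSpd : Sig.PosDef := by
    have := Matrix.PosDef.posSemidef_add hA1 hsm
    simpa using this
  haveI : Invertible Sig := Sig.invertibleOfIsUnitDet (isUnit_iff_isUnit_det _ |>.1 hSpd.isUnit)
  have hdet : IsUnit Sig.det := isUnit_iff_isUnit_det _ |>.1 hSpd.isUnit
  have hinv : Sig⁻¹ * Sig = 1 := Matrix.nonsing_inv_mul _ hdet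
  have hinv' : Sig * Sig⁻¹ = 1 := Matrix.mul_nonsing_inv _ hdet
  have hSsymm : Sigᵀ = Sig := by
    have := hSpd.isHermitian
    rwa [Matrix.IsHermitian, conjTranspose_eq_transpose_of_trivial] at this
  have hinvT : Sig⁻¹ᵀ = Sig⁻¹ := by rw [Matrix.transpose_nonsing_inv, hSsymm]
  -- the key identity V Σ Vᵀ = S Σ⁻¹ Sᵀ
  have key : (S * Sig⁻¹) * Sig * (S * Sig⁻¹)ᵀ = S * Sig⁻¹ * Sᵀ := by
    rw [Matrix.transpose_mul, hinvT, Matrix.mul_assoc (S * Sig⁻¹),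
      ← Matrix.mul_assoc Sig, hinv', Matrix.one_mul, Matrix.mul_assoc]
  have hfeasV : Ψ₂ * (S * Sig⁻¹) = 1 := by
    rw [← Matrix.mul_assoc, hfeas, hinv']
  -- Schur complements
  have h3 : (Sig - σw2 • (1 : Matrix (Fin n) (Fin n) ℝ)
      - Xb * (S * Sig⁻¹) * Sig * (S * Sig⁻¹)ᵀ * Xbᵀ).PosSemidef := by
    have hb1' : (fromBlocks (Sig - σw2 • (1 : Matrix (Fin n) (Fin n) ℝ)) (Xb * S)
        (Xb * S)ᵀ Sig).PosSemidef := by rw [Matrix.transpose_mul]; exact hblk1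
    have := schur_aux hSpd hb1'
    have heq : Xb * S * Sig⁻¹ * (Xb * S)ᵀ
        = Xb * (S * Sig⁻¹) * Sig * (S * Sig⁻¹)ᵀ * Xbᵀ := by
      simp only [Matrix.transpose_mul, hinvT, Matrix.mul_assoc]
      rw [← Matrix.mul_assoc Sig⁻¹ Sig, hinv, Matrix.one_mul]
    rwa [heq] at this
  have h4 : (L - Ψ₁ * (S * Sig⁻¹) * Sig * (S * Sig⁻¹)ᵀ * Ψ₁ᵀ).PosSemidef := by
    have hb2' : (fromBlocks L (Ψ₁ * S) (Ψ₁ * S)ᵀ Sig).PosSemidef := by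
      rw [Matrix.transpose_mul]; exact hblk2
    have := schur_aux hSpd hb2'
    have heq : Ψ₁ * S * Sig⁻¹ * (Ψ₁ * S)ᵀ
        = Ψ₁ * (S * Sig⁻¹) * Sig * (S * Sig⁻¹)ᵀ * Ψ₁ᵀ := by
      simp only [Matrix.transpose_mul, hinvT, Matrix.mul_assoc]
      rw [← Matrix.mul_assoc Sig⁻¹ Sig, hinv, Matrix.one_mul]
    rwa [heq] at this
  have h5 : (M - (S * Sig⁻¹) * Sig * (S * Sig⁻¹)ᵀ).PosSemidef := by
    have := schur_aux hSpd hblk3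
    have heq : S * Sig⁻¹ * Sᵀ = (S * Sig⁻¹) * Sig * (S * Sig⁻¹)ᵀ := key.symm
    rwa [heq] at this
  refine ⟨hSpd, hfeasV, h3, h4, h5, ?_⟩
  -- cost inequality
  set V := S * Sig⁻¹ with hV
  have hVSVpsd : (V * Sig * Vᵀ).PosSemidef := by
    have := hSpd.posSemidef.mul_mul_conjTranspose_same V
    rwa [conjTranspose_eq_transpose_of_trivial] at this
  -- term 1: Tr(Vᵀ Ψ₁ᵀ R Ψ₁ V Σ) ≤ Tr(R L)
  have ht1 : ((Vᵀ * Ψ₁ᵀ * R * Ψ₁ * V) * Sig).trace ≤ (R * L).trace := by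
    have h0 : 0 ≤ (R * (L - Ψ₁ * V * Sig * Vᵀ * Ψ₁ᵀ)).trace := by
      refine trace_mul_psd_nonneg hR ?_
      have := h4; simpa [Matrix.mul_assoc] using this
    have hcyc : ((Vᵀ * Ψ₁ᵀ * R * Ψ₁ * V) * Sig).trace
        = (R * (Ψ₁ * V * Sig * Vᵀ * Ψ₁ᵀ)).trace := by
      rw [show (Vᵀ * Ψ₁ᵀ * R * Ψ₁ * V) * Sig = (Vᵀ * Ψ₁ᵀ) * (R * (Ψ₁ * V * Sig)) by
        simp only [Matrix.mul_assoc], Matrix.trace_mul_comm]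
      simp only [Matrix.mul_assoc]
    rw [hcyc]
    have := h0
    rw [Matrix.mul_sub, Matrix.trace_sub, sub_nonneg] at this
    exact this
  -- term 2: Tr(Ψ V Σ Vᵀ) ≤ Tr(M Ψ)
  have ht2 : (Ψ * V * Sig * Vᵀ).trace ≤ (M * Ψ).trace := by
    have h0 : 0 ≤ ((M - V * Sig * Vᵀ) * Ψ).trace := by
      refine trace_mul_psd_nonneg ?_ hΨ
      simpa [Matrix.mul_assoc] using h5
    have hcyc : (Ψ * V * Sig * Vᵀ).trace = ((V * Sig * Vᵀ) * Ψ).trace := by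
      rw [show Ψ * V * Sig * Vᵀ = Ψ * (V * Sig * Vᵀ) by simp only [Matrix.mul_assoc],
        Matrix.trace_mul_comm]
    rw [hcyc]
    rw [Matrix.sub_mul, Matrix.trace_sub, sub_nonneg] at h0
    exact h0
  have hsplit : ((Q + Vᵀ * Ψ₁ᵀ * R * Ψ₁ * V) * Sig).trace
      = (Q * Sig).trace + ((Vᵀ * Ψ₁ᵀ * R * Ψ₁ * V) * Sig).trace := by
    rw [Matrix.add_mul, Matrix.trace_add]
  rw [hsplit]
  have := mul_le_mul_of_nonneg_left ht2 hlam
  linarith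
end

section
/- Let σ_w² ∈ ℝ, λ ∈ ℝ, Q ∈ ℝ^{n×n}, R ∈ ℝ^{m×m}, let Ψ ∈ ℝ^{(n+m)×(n+m)} with first m rows Ψ₁ and last n rows Ψ₂, and let X̄₁ ∈ ℝ^{n×(n+m)}. Suppose V ∈ ℝ^{(n+m)×n} and a symmetric positive definite Σ ∈ ℝ^{n×n} satisfy Ψ₂ V = Iₙ and Σ = σ_w² Iₙ + X̄₁ V Σ Vᵀ X̄₁ᵀ. Define S := V Σ, L := Ψ₁ V Σ Vᵀ Ψ₁ᵀ, M := V Σ Vᵀ. Then Ψ₂ S = Σ, the three block matrices [[Σ − σ_w² Iₙ, X̄₁ S],[Sᵀ X̄₁ᵀ, Σ]], [[L, Ψ₁ S],[Sᵀ Ψ₁ᵀ, Σ]], [[M, S],[Sᵀ, Σ]] are symmetric positive semidefinite, and Tr(Q Σ) + Tr(R L) + λ Tr(M Ψ) = Tr((Q + Vᵀ Ψ₁ᵀ R Ψ₁ V)Σ) + λ Tr(Ψ V Σ Vᵀ). -/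
open Matrix

lemma aux_psd {K N : Type*} [Fintype K] [Fintype N] [DecidableEq N]
    (A : Matrix K N ℝ) (S : Matrix N N ℝ) (hS : S.PosSemidef) :
    (fromBlocks (A * S * Aᵀ) (A * S) (S * Aᵀ) S).PosSemidef := by
  have h := hS.mul_mul_conjTranspose_same (fromRows A (1 : Matrix N N ℝ))
  have he : (fromRows A (1 : Matrix N N ℝ)) * S * (fromRows A (1 : Matrix N N ℝ))ᴴ =
      fromBlocks (A * S * Aᵀ) (A * S) (S * Aᵀ) S := by
    rw [conjTranspose_eq_transpose_of_trivial, transpose_fromRows, fromRows_mul,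
      fromRows_mul_fromCols]
    simp
  rwa [he] at h

/-- converse direction of Proposition 1. A feasible point `(V, Σ)` of
the direct Bayesian LQR problem yields, via `S := VΣ`, `L := Ψ₁VΣVᵀΨ₁ᵀ`, `M := VΣVᵀ`, a
feasible point of the SDP with equal objective value. -/
theorem stmt9 (n m : ℕ)
    (σw2 lam : ℝ)
    (Q : Matrix (Fin n) (Fin n) ℝ) (R : Matrix (Fin m) (Fin m) ℝ)
    (Ψ : Matrix (Fin m ⊕ Fin n) (Fin m ⊕ Fin n) ℝ)
    (Xb : Matrix (Fin n) (Fin m ⊕ Fin n) ℝ)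
    (V : Matrix (Fin m ⊕ Fin n) (Fin n) ℝ)
    (Sig : Matrix (Fin n) (Fin n) ℝ) (hSig : Sig.PosDef)
    (hV : Ψ.submatrix Sum.inr id * V = 1)
    (hlyap : Sig = σw2 • (1 : Matrix (Fin n) (Fin n) ℝ) + Xb * V * Sig * Vᵀ * Xbᵀ) :
    Ψ.submatrix Sum.inr id * (V * Sig) = Sig ∧
    (fromBlocks (Sig - σw2 • (1 : Matrix (Fin n) (Fin n) ℝ)) (Xb * (V * Sig))
      ((V * Sig)ᵀ * Xbᵀ) Sig).PosSemidef ∧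
    (fromBlocks (Ψ.submatrix Sum.inl id * V * Sig * Vᵀ * (Ψ.submatrix Sum.inl id)ᵀ)
      (Ψ.submatrix Sum.inl id * (V * Sig))
      ((V * Sig)ᵀ * (Ψ.submatrix Sum.inl id)ᵀ) Sig).PosSemidef ∧
    (fromBlocks (V * Sig * Vᵀ) (V * Sig) (V * Sig)ᵀ Sig).PosSemidef ∧
    (Q * Sig).trace
      + (R * (Ψ.submatrix Sum.inl id * V * Sig * Vᵀ * (Ψ.submatrix Sum.inl id)ᵀ)).trace
      + lam * ((V * Sig * Vᵀ) * Ψ).trace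
    = ((Q + Vᵀ * (Ψ.submatrix Sum.inl id)ᵀ * R * Ψ.submatrix Sum.inl id * V) * Sig).trace
      + lam * (Ψ * V * Sig * Vᵀ).trace := by
  have hpsd := hSig.posSemidef
  have hST : Sigᵀ = Sig := by
    rw [← conjTranspose_eq_transpose_of_trivial]; exact hpsd.1
  refine ⟨?_, ?_, ?_, ?_, ?_⟩
  · rw [← Matrix.mul_assoc, hV, one_mul]
  · have h1 : Sig - σw2 • (1 : Matrix (Fin n) (Fin n) ℝ)
        = Xb * V * Sig * Vᵀ * Xbᵀ := by
      nth_rewrite 1 [hlyap]; exact add_sub_cancel_left _ _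
    rw [h1]
    have h := aux_psd (Xb * V) Sig hpsd
    simp only [transpose_mul, hST, Matrix.mul_assoc] at h ⊢
    exact h
  · have h := aux_psd (Ψ.submatrix Sum.inl id * V) Sig hpsd
    simp only [transpose_mul, hST, Matrix.mul_assoc] at h ⊢
    exact h
  · have h := aux_psd V Sig hpsd
    simp only [transpose_mul, hST, Matrix.mul_assoc] at h ⊢
    exact h
  · set P := Ψ.submatrix Sum.inl id with hP
    have t1 : (R * (P * V * Sig * Vᵀ * Pᵀ)).trace
        = ((Vᵀ * Pᵀ * R * P * V) * Sig).trace := by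
      rw [show R * (P * V * Sig * Vᵀ * Pᵀ) = (R * (P * (V * Sig))) * (Vᵀ * Pᵀ) from by
        simp only [Matrix.mul_assoc], Matrix.trace_mul_comm]
      simp only [Matrix.mul_assoc]
    have t2 : ((V * Sig * Vᵀ) * Ψ).trace = (Ψ * V * Sig * Vᵀ).trace := by
      rw [Matrix.trace_mul_comm]; simp only [Matrix.mul_assoc]
    rw [add_mul, trace_add, t2, t1]
end
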